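/- arXiv:1206.5840 — 2 statements merged into one kernel-verified Lean document; each statement's English description precedes it below -/
import Mathlib

section
/- Let B be a standard fractional Brownian motion with Hurst parameter H ∈ (0,1], i.e., a centered Gaussian process with Cov(B_s, B_t) = (|s|^{2H} + |t|^{2H} − |t−s|^{2H})/2. Fix t ∈ ℝ and define Z_s = √2·B_s − |s|^{2H}. Then for any integer k, real numbers s_1 < ⋯ < s_k and β_1, …, β_k ∈ ℝ, one has E[e^{Z_t} · exp(∑_i β_i Z_{s_i})] = E[exp(∑_i β_i (|t|^{2H} + Z^{(t)}_{s_i}))], where Z^{(t)}_s = √2·B_s − |s−t|^{2H}. -/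
open MeasureTheory ProbabilityTheory Real Filter
noncomputable section

/-- `B` is a (two-sided) fractional Brownian motion with Hurst parameter `H`:
a centered Gaussian process with covariance
`Cov(B_s, B_t) = (|s|^{2H} + |t|^{2H} - |t-s|^{2H})/2`, encoded via its
finite-dimensional distributions: every finite linear combination is Gaussian
with mean `0` and the variance induced by this covariance. -/
def IsFBM {Ω : Type*} [MeasureSpace Ω] (H : ℝ) (B : ℝ → Ω → ℝ) : Prop :=
  ∀ (n : ℕ) (s c : Fin n → ℝ),
    Measure.map (fun ω => ∑ i, c i * B (s i) ω) (ℙ : Measure Ω) =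
      gaussianReal 0
        (Real.toNNReal (∑ i, ∑ j, c i * c j *
          ((|s i| ^ (2*H) + |s j| ^ (2*H) - |s i - s j| ^ (2*H)) / 2)))

open scoped NNReal ENNReal

section FBMAux

lemma integral_gaussianReal_eq (μ : ℝ) {v : ℝ≥0} (hv : v ≠ 0) (g : ℝ → ℝ) :
    ∫ x, g x ∂(gaussianReal μ v) = ∫ x, gaussianPDFReal μ v x * g x := by
  rw [gaussianReal_of_var_ne_zero _ hv, gaussianPDF_def]
  have h : (fun x => ENNReal.ofReal (gaussianPDFReal μ v x))
      = fun x => ((Real.toNNReal (gaussianPDFReal μ v x) : ℝ≥0) : ℝ≥0∞) := rfl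
  rw [h, integral_withDensity_eq_integral_smul
    ((measurable_gaussianPDFReal μ v).real_toNNReal) g]
  refine integral_congr_ae (ae_of_all _ fun x => ?_)
  simp [NNReal.smul_def, Real.coe_toNNReal _ (gaussianPDFReal_nonneg μ v x)]

lemma integrable_gaussianReal_iff (μ : ℝ) {v : ℝ≥0} (hv : v ≠ 0) (g : ℝ → ℝ) :
    Integrable g (gaussianReal μ v) ↔
      Integrable (fun x => gaussianPDFReal μ v x * g x) volume := by
  rw [gaussianReal_of_var_ne_zero _ hv, gaussianPDF_def]
  have h : (fun x => ENNReal.ofReal (gaussianPDFReal μ v x))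
      = fun x => ((Real.toNNReal (gaussianPDFReal μ v x) : ℝ≥0) : ℝ≥0∞) := rfl
  rw [h, integrable_withDensity_iff_integrable_smul
    ((measurable_gaussianPDFReal μ v).real_toNNReal)]
  constructor <;> intro hI <;> refine hI.congr (ae_of_all _ fun x => ?_) <;>
    simp [NNReal.smul_def, Real.coe_toNNReal _ (gaussianPDFReal_nonneg μ v x)]

lemma gaussian_tilt (v : ℝ≥0) (hv : v ≠ 0) (c x : ℝ) :
    gaussianPDFReal 0 v x * rexp (c * x)
      = rexp ((v:ℝ) * c ^ 2 / 2) * gaussianPDFReal (c * v) v x := by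
  have hv' : (0:ℝ) < v := lt_of_le_of_ne v.coe_nonneg (by exact_mod_cast hv.symm)
  simp only [gaussianPDFReal]
  rw [mul_assoc, ← Real.exp_add]
  rw [show rexp ((v:ℝ)*c^2/2) * ((Real.sqrt (2*π*v))⁻¹ * rexp (-(x - c*v)^2/(2*v)))
      = (Real.sqrt (2*π*v))⁻¹ * rexp ((v:ℝ)*c^2/2 + -(x - c*(v:ℝ))^2/(2*(v:ℝ))) by
    rw [Real.exp_add]; ring]
  congr 1
  field_simp
  ring

lemma integral_exp_gaussianReal (v : ℝ≥0) (c : ℝ) :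
    ∫ x, rexp (c * x) ∂(gaussianReal 0 v) = rexp ((v:ℝ) * c ^ 2 / 2) := by
  by_cases hv : v = 0
  · simp [hv]
  · rw [integral_gaussianReal_eq 0 hv]
    simp_rw [gaussian_tilt v hv c]
    rw [integral_const_mul, integral_gaussianPDFReal_eq_one _ hv, mul_one]

lemma integrable_sq_gaussianReal (v : ℝ≥0) :
    Integrable (fun x : ℝ => x ^ 2) (gaussianReal 0 v) := by
  by_cases hv : v = 0
  · simp only [hv, gaussianReal_zero_var]
    exact (integrable_const ((0:ℝ) ^ 2)).congr (ae_eq_dirac (fun x : ℝ => x ^ 2)).symm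
  · rw [integrable_gaussianReal_iff 0 hv]
    have hv' : (0:ℝ) < v := lt_of_le_of_ne v.coe_nonneg (by exact_mod_cast Ne.symm hv)
    have hb : (0:ℝ) < (2 * (v:ℝ))⁻¹ := by positivity
    have h := (integrable_rpow_mul_exp_neg_mul_sq hb (s := 2) (by norm_num)).const_mul
      ((Real.sqrt (2 * π * v))⁻¹)
    refine h.congr (ae_of_all _ fun x => ?_)
    have h2 : x ^ (2:ℝ) = x ^ 2 := by
      rw [show (2:ℝ) = ((2:ℕ):ℝ) by norm_num, Real.rpow_natCast]
    simp only [gaussianPDFReal, h2]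
    rw [neg_div, div_eq_inv_mul, sub_zero]
    push_cast
    ring_nf

lemma integral_sq_exp_neg_mul_sq {b : ℝ} (hb : 0 < b) :
    ∫ x : ℝ, x ^ 2 * rexp (-b * x ^ 2) = b ^ (-(3:ℝ)/2) * Real.sqrt π / 2 := by
  have heven : ∀ x : ℝ, x ^ 2 * rexp (-b * x ^ 2) = |x| ^ 2 * rexp (-b * |x| ^ 2) := by
    intro x; rw [sq_abs]
  calc ∫ x : ℝ, x ^ 2 * rexp (-b * x ^ 2)
      = ∫ x : ℝ, (fun y => y ^ 2 * rexp (-b * y ^ 2)) |x| := by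
        exact integral_congr_ae (ae_of_all _ heven)
    _ = 2 * ∫ x in Set.Ioi (0:ℝ), x ^ 2 * rexp (-b * x ^ 2) := (integral_comp_abs (f := fun y => y ^ 2 * rexp (-b * y ^ 2)))
    _ = 2 * ∫ x in Set.Ioi (0:ℝ), x ^ (2:ℝ) * rexp (-b * x ^ (2:ℝ)) := by
        congr 1
        refine setIntegral_congr_fun measurableSet_Ioi (fun x hx => ?_)
        rw [show (2:ℝ) = ((2:ℕ):ℝ) by norm_num, Real.rpow_natCast]
    _ = 2 * (b ^ (-((2:ℝ)+1)/2) * Real.Gamma (((2:ℝ)+1)/2) / 2) := by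
        rw [integral_rpow_mul_exp_neg_mul_rpow (by norm_num) (by norm_num) hb]
        ring
    _ = b ^ (-(3:ℝ)/2) * Real.sqrt π / 2 := by
        have h32 : ((2:ℝ)+1)/2 = (1/2 : ℝ) + 1 := by norm_num
        rw [h32, Real.Gamma_add_one (by norm_num), Real.Gamma_one_half_eq]
        norm_num
        ring


lemma gauss_const_calc {v : ℝ≥0} (hv : v ≠ 0) :
    (Real.sqrt (2 * π * v))⁻¹ * (((2 * (v:ℝ))⁻¹) ^ (-(3:ℝ)/2) * Real.sqrt π / 2) = v := by
  have hv' : (0:ℝ) < v := lt_of_le_of_ne v.coe_nonneg (by exact_mod_cast Ne.symm hv)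
  have h2v : (0:ℝ) < 2 * v := by positivity
  have h1 : ((2 * (v:ℝ))⁻¹) ^ (-(3:ℝ)/2) = (2 * (v:ℝ)) ^ ((3:ℝ)/2) := by
    rw [Real.inv_rpow h2v.le, ← Real.rpow_neg h2v.le, neg_div, neg_neg]
  have h2 : (2 * (v:ℝ)) ^ ((3:ℝ)/2) = Real.sqrt (2 * v) * (2 * v) := by
    rw [show (3:ℝ)/2 = 1/2 + 1 by norm_num, Real.rpow_add h2v, Real.rpow_one,
      ← Real.sqrt_eq_rpow]
  have h3 : Real.sqrt (2 * π * (v:ℝ)) = Real.sqrt (2 * v) * Real.sqrt π := by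
    rw [show 2 * π * (v:ℝ) = (2 * v) * π by ring, Real.sqrt_mul h2v.le]
  have hs : 0 < Real.sqrt (2 * (v:ℝ)) := Real.sqrt_pos.mpr h2v
  have hp : 0 < Real.sqrt π := Real.sqrt_pos.mpr Real.pi_pos
  rw [h1, h2, h3]
  field_simp

lemma integral_sq_gaussianReal (v : ℝ≥0) :
    ∫ x, x ^ 2 ∂(gaussianReal 0 v) = v := by
  by_cases hv : v = 0
  · simp [hv]
  · have hv' : (0:ℝ) < v := lt_of_le_of_ne v.coe_nonneg (by exact_mod_cast Ne.symm hv)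
    have hb : (0:ℝ) < (2 * (v:ℝ))⁻¹ := by positivity
    have hpt : ∀ x : ℝ, gaussianPDFReal 0 v x * x ^ 2
        = (Real.sqrt (2 * π * v))⁻¹ * (x ^ 2 * rexp (-(2 * (v:ℝ))⁻¹ * x ^ 2)) := by
      intro x
      simp only [gaussianPDFReal, sub_zero]
      rw [neg_div, div_eq_inv_mul, neg_mul]
      ring
    rw [integral_gaussianReal_eq 0 hv]
    simp_rw [hpt]
    rw [integral_const_mul, integral_sq_exp_neg_mul_sq hb, gauss_const_calc hv]

lemma rpow_abs_sub_le {H : ℝ} (hH : H ∈ Set.Ioc (0:ℝ) 1) (a b : ℝ) :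
    |a - b| ^ (2*H) ≤ 2 * (|a| ^ (2*H) + |b| ^ (2*H)) := by
  obtain ⟨h0, h1⟩ := hH
  have h2H : (0:ℝ) < 2 * H := by linarith
  have step1 : |a - b| ^ (2*H) ≤ (|a| + |b|) ^ (2*H) :=
    Real.rpow_le_rpow (abs_nonneg _) (abs_sub a b) h2H.le
  refine step1.trans ?_
  set x : ℝ≥0 := ⟨|a|, abs_nonneg a⟩
  set y : ℝ≥0 := ⟨|b|, abs_nonneg b⟩
  have hxy : ((x + y : ℝ≥0) : ℝ) = |a| + |b| := rfl
  have key : (x + y) ^ (2*H) ≤ 2 * (x ^ (2*H) + y ^ (2*H)) := by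
    rcases le_total (2*H) 1 with h | h
    · calc (x + y) ^ (2*H) ≤ x ^ (2*H) + y ^ (2*H) :=
            NNReal.rpow_add_le_add_rpow x y h2H.le h
        _ ≤ 2 * (x ^ (2*H) + y ^ (2*H)) :=
            le_mul_of_one_le_left zero_le one_le_two
    · calc (x + y) ^ (2*H) ≤ 2 ^ (2*H - 1) * (x ^ (2*H) + y ^ (2*H)) :=
            NNReal.rpow_add_le_mul_rpow_add_rpow x y h
        _ ≤ 2 * (x ^ (2*H) + y ^ (2*H)) := by
            have h2 : (2:ℝ≥0) ^ (2*H - 1) ≤ 2 ^ (1:ℝ) := by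
              refine NNReal.rpow_le_rpow_of_exponent_le (by norm_num) (by linarith)
            rw [NNReal.rpow_one] at h2
            exact mul_le_mul_of_nonneg_right h2 zero_le
  have := (NNReal.coe_le_coe).mpr key
  push_cast [NNReal.coe_rpow] at this
  rw [← hxy]
  convert this using 2 <;> rfl

/-- The fBM covariance quadratic form. -/
def fQ (H : ℝ) {n : ℕ} (s c : Fin n → ℝ) : ℝ :=
  ∑ i, ∑ j, c i * c j *
    ((|s i| ^ (2*H) + |s j| ^ (2*H) - |s i - s j| ^ (2*H)) / 2)

section

variable {Ω : Type*} [MeasureSpace Ω] [IsProbabilityMeasure (ℙ : Measure Ω)]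
  {H : ℝ} {B : ℝ → Ω → ℝ}
  (hB : ∀ (n : ℕ) (s c : Fin n → ℝ),
    Measure.map (fun ω => ∑ i, c i * B (s i) ω) (ℙ : Measure Ω) =
      gaussianReal 0 (Real.toNNReal (fQ H s c)))

include hB

lemma fbm_aemeasurable (n : ℕ) (s c : Fin n → ℝ) :
    AEMeasurable (fun ω => ∑ i, c i * B (s i) ω) (ℙ : Measure Ω) := by
  by_contra h
  have h0 := hB n s c
  rw [Measure.map_of_not_aemeasurable h] at h0
  have := congrArg (fun μ : Measure ℝ => μ Set.univ) h0
  simp at this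

lemma fbm_momsq (n : ℕ) (s c : Fin n → ℝ) :
    ∫ ω, (∑ i, c i * B (s i) ω) ^ 2 ∂(ℙ : Measure Ω)
      = ((Real.toNNReal (fQ H s c) : ℝ≥0) : ℝ) := by
  have h1 := integral_map (f := fun x : ℝ => x ^ 2) (fbm_aemeasurable hB n s c)
    (continuous_pow 2).aestronglyMeasurable
  rw [hB n s c] at h1
  rw [← h1, integral_sq_gaussianReal]

lemma fbm_intsq (n : ℕ) (s c : Fin n → ℝ) :
    Integrable (fun ω => (∑ i, c i * B (s i) ω) ^ 2) (ℙ : Measure Ω) := by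
  have h1 := (integrable_map_measure (μ := (ℙ : Measure Ω))
    (f := fun ω => ∑ i, c i * B (s i) ω) (g := fun x : ℝ => x ^ 2)
    (continuous_pow 2).aestronglyMeasurable (fbm_aemeasurable hB n s c)).mp
  rw [hB n s c] at h1
  exact h1 (integrable_sq_gaussianReal _)

lemma fbm_mgf (n : ℕ) (s c : Fin n → ℝ) (r : ℝ) :
    ∫ ω, rexp (r * ∑ i, c i * B (s i) ω) ∂(ℙ : Measure Ω)
      = rexp (((Real.toNNReal (fQ H s c) : ℝ≥0) : ℝ) * r ^ 2 / 2) := by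
  have h1 := integral_map (f := fun x : ℝ => rexp (r * x)) (fbm_aemeasurable hB n s c)
    (Real.continuous_exp.comp (continuous_const.mul continuous_id)).aestronglyMeasurable
  rw [hB n s c] at h1
  rw [← h1, integral_exp_gaussianReal]

lemma fbm_aemeas_single (a : ℝ) : AEMeasurable (B a) (ℙ : Measure Ω) := by
  have h := fbm_aemeasurable hB 1 ![a] ![1]
  have he : (fun ω => ∑ i : Fin 1, (![1] : Fin 1 → ℝ) i * B (![a] i) ω) = B a := by
    funext ω; simp
  rwa [he] at h

end

section
variable {Ω : Type*} [MeasureSpace Ω] [IsProbabilityMeasure (ℙ : Measure Ω)]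
  {H : ℝ} {B : ℝ → Ω → ℝ}
  (hH : H ∈ Set.Ioc (0:ℝ) 1)
  (hB : ∀ (n : ℕ) (s c : Fin n → ℝ),
    Measure.map (fun ω => ∑ i, c i * B (s i) ω) (ℙ : Measure Ω) =
      gaussianReal 0 (Real.toNNReal (fQ H s c)))

include hH hB

lemma fbm_sq_single (a : ℝ) :
    ∫ ω, (B a ω) ^ 2 ∂(ℙ : Measure Ω) = |a| ^ (2*H) := by
  have h2H : 2 * H ≠ 0 := by have := hH.1; positivity
  have h := fbm_momsq hB 1 ![a] ![1]
  have he : (fun ω => (∑ i : Fin 1, (![1] : Fin 1 → ℝ) i * B (![a] i) ω) ^ 2)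
      = fun ω => (B a ω) ^ 2 := by funext ω; simp
  rw [show (∫ ω, (∑ i : Fin 1, (![1] : Fin 1 → ℝ) i * B (![a] i) ω) ^ 2 ∂(ℙ : Measure Ω))
      = ∫ ω, (B a ω) ^ 2 ∂(ℙ : Measure Ω) by rw [he]] at h
  have hq : fQ H ![a] ![1] = |a| ^ (2*H) := by
    simp [fQ, Fin.sum_univ_one, sub_self, abs_zero, Real.zero_rpow h2H]
  rw [h, hq, Real.coe_toNNReal _ (Real.rpow_nonneg (abs_nonneg a) _)]

lemma fbm_intsq_single (a : ℝ) :
    Integrable (fun ω => (B a ω) ^ 2) (ℙ : Measure Ω) := by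
  have h := fbm_intsq hB 1 ![a] ![1]
  have he : (fun ω => (∑ i : Fin 1, (![1] : Fin 1 → ℝ) i * B (![a] i) ω) ^ 2)
      = fun ω => (B a ω) ^ 2 := by funext ω; simp
  rwa [he] at h

lemma fbm_intprod (a b : ℝ) :
    Integrable (fun ω => B a ω * B b ω) (ℙ : Measure Ω) := by
  refine Integrable.mono' (((fbm_intsq_single hH hB a).add
    (fbm_intsq_single hH hB b)).div_const 2)
    ((fbm_aemeas_single hB a).mul (fbm_aemeas_single hB b)).aestronglyMeasurable
    (ae_of_all _ fun ω => ?_)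
  simp only [Pi.add_apply]
  have h1 : ‖B a ω * B b ω‖ = |B a ω| * |B b ω| := by
    rw [Real.norm_eq_abs, abs_mul]
  rw [h1]
  nlinarith [sq_nonneg (|B a ω| - |B b ω|), sq_abs (B a ω), sq_abs (B b ω)]

lemma fbm_cross (a b : ℝ) :
    ∫ ω, B a ω * B b ω ∂(ℙ : Measure Ω)
      = (|a| ^ (2*H) + |b| ^ (2*H) - |a - b| ^ (2*H)) / 2 := by
  have h2H : 2 * H ≠ 0 := by have := hH.1; positivity
  have hpairf : (fun ω => (∑ i : Fin 2, (![1,1] : Fin 2 → ℝ) i * B (![a,b] i) ω) ^ 2)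
      = fun ω => (B a ω + B b ω) ^ 2 := by funext ω; simp
  have hq : fQ H ![a,b] ![1,1]
      = 2 * (|a| ^ (2*H) + |b| ^ (2*H)) - |a - b| ^ (2*H) := by
    simp [fQ, Fin.sum_univ_two, sub_self, abs_zero, Real.zero_rpow h2H,
      abs_sub_comm b a]
    ring
  have hqnn : 0 ≤ fQ H ![a,b] ![1,1] := by
    rw [hq]; linarith [rpow_abs_sub_le hH a b]
  have hsum : ∫ ω, (B a ω + B b ω) ^ 2 ∂(ℙ : Measure Ω)
      = 2 * (|a| ^ (2*H) + |b| ^ (2*H)) - |a - b| ^ (2*H) := by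
    have h := fbm_momsq hB 2 ![a,b] ![1,1]
    rw [show (∫ ω, (∑ i : Fin 2, (![1,1] : Fin 2 → ℝ) i * B (![a,b] i) ω) ^ 2 ∂(ℙ : Measure Ω))
      = ∫ ω, (B a ω + B b ω) ^ 2 ∂(ℙ : Measure Ω) by rw [hpairf]] at h
    rw [h, Real.coe_toNNReal _ hqnn, hq]
  have hexp : ∀ ω : Ω, (B a ω + B b ω) ^ 2
      = ((B a ω) ^ 2 + 2 * (B a ω * B b ω)) + (B b ω) ^ 2 := fun ω => by ring
  have i1 := fbm_intsq_single hH hB a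
  have i3 := fbm_intsq_single hH hB b
  have i2 : Integrable (fun ω => 2 * (B a ω * B b ω)) (ℙ : Measure Ω) :=
    (fbm_intprod hH hB a b).const_mul 2
  have i12 : Integrable (fun ω => (B a ω) ^ 2 + 2 * (B a ω * B b ω)) (ℙ : Measure Ω) :=
    i1.add i2
  rw [show (fun ω => (B a ω + B b ω) ^ 2)
      = fun ω => ((B a ω) ^ 2 + 2 * (B a ω * B b ω)) + (B b ω) ^ 2 from funext hexp]
    at hsum
  rw [integral_add i12 i3, integral_add i1 i2,
    integral_const_mul, fbm_sq_single hH hB a, fbm_sq_single hH hB b] at hsum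
  linarith

lemma fbm_Q_eq (n : ℕ) (s c : Fin n → ℝ) :
    ∫ ω, (∑ i, c i * B (s i) ω) ^ 2 ∂(ℙ : Measure Ω) = fQ H s c := by
  have hexp : (fun ω => (∑ i, c i * B (s i) ω) ^ 2)
      = fun ω => ∑ i, ∑ j, (c i * c j) * (B (s i) ω * B (s j) ω) := by
    funext ω
    rw [pow_two, Finset.sum_mul_sum]
    exact Finset.sum_congr rfl fun i _ => Finset.sum_congr rfl fun j _ => by ring
  rw [hexp, integral_finset_sum _ fun i _ => integrable_finset_sum _
    fun j _ => (fbm_intprod hH hB (s i) (s j)).const_mul _]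
  rw [fQ]
  refine Finset.sum_congr rfl fun i _ => ?_
  rw [integral_finset_sum _ fun j _ => (fbm_intprod hH hB (s i) (s j)).const_mul _]
  refine Finset.sum_congr rfl fun j _ => ?_
  rw [integral_const_mul, fbm_cross hH hB (s i) (s j)]

lemma fbm_Q_nonneg (n : ℕ) (s c : Fin n → ℝ) :
    ((Real.toNNReal (fQ H s c) : ℝ≥0) : ℝ) = fQ H s c := by
  rw [← fbm_momsq hB n s c, fbm_Q_eq hH hB n s c]

lemma fbm_mgf_real (n : ℕ) (s c : Fin n → ℝ) (r : ℝ) :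
    ∫ ω, rexp (r * ∑ i, c i * B (s i) ω) ∂(ℙ : Measure Ω)
      = rexp (fQ H s c * r ^ 2 / 2) := by
  rw [fbm_mgf hB n s c r, fbm_Q_nonneg hH hB n s c]

end

end FBMAux

theorem stmt0 {Ω : Type*} [MeasureSpace Ω] [IsProbabilityMeasure (ℙ : Measure Ω)]
    (H : ℝ) (hH : H ∈ Set.Ioc (0:ℝ) 1) (B : ℝ → Ω → ℝ) (hB : IsFBM H B)
    (t : ℝ) (Z Zt : ℝ → Ω → ℝ)
    (hZ : ∀ s ω, Z s ω = Real.sqrt 2 * B s ω - |s| ^ (2*H))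
    (hZt : ∀ s ω, Zt s ω = Real.sqrt 2 * B s ω - |s - t| ^ (2*H))
    (k : ℕ) (s : Fin k → ℝ) (hs : StrictMono s) (β : Fin k → ℝ) :
    ∫ ω, Real.exp (Z t ω) * Real.exp (∑ i, β i * Z (s i) ω) ∂ℙ =
      ∫ ω, Real.exp (∑ i, β i * (|t| ^ (2*H) + Zt (s i) ω)) ∂ℙ := by
  have h2H : 2 * H ≠ 0 := by have := hH.1; positivity
  have hB' : ∀ (n : ℕ) (p c : Fin n → ℝ),
      Measure.map (fun ω => ∑ i, c i * B (p i) ω) (ℙ : Measure Ω) =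
        gaussianReal 0 (Real.toNNReal (fQ H p c)) := hB
  have hL : ∀ ω, Real.exp (Z t ω) * Real.exp (∑ i, β i * Z (s i) ω)
      = Real.exp (-(|t| ^ (2*H) + ∑ i, β i * |s i| ^ (2*H)))
        * Real.exp (Real.sqrt 2 *
            ∑ i : Fin (k+1), (Fin.cons 1 β : Fin (k+1) → ℝ) i * B ((Fin.cons t s : Fin (k+1) → ℝ) i) ω) := by
    intro ω
    rw [← Real.exp_add, ← Real.exp_add, Fin.sum_univ_succ]
    simp only [Fin.cons_zero, Fin.cons_succ, hZ]
    have h1 : ∑ i, β i * (Real.sqrt 2 * B (s i) ω - |s i| ^ (2*H))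
        = Real.sqrt 2 * ∑ i, β i * B (s i) ω - ∑ i, β i * |s i| ^ (2*H) := by
      rw [Finset.mul_sum, ← Finset.sum_sub_distrib]
      exact Finset.sum_congr rfl fun i _ => by ring
    rw [h1]
    ring
  have hR : ∀ ω, Real.exp (∑ i, β i * (|t| ^ (2*H) + Zt (s i) ω))
      = Real.exp (∑ i, β i * (|t| ^ (2*H) - |s i - t| ^ (2*H)))
        * Real.exp (Real.sqrt 2 * ∑ i, β i * B (s i) ω) := by
    intro ω
    rw [← Real.exp_add]
    congr 1
    simp only [hZt]
    rw [Finset.mul_sum, ← Finset.sum_add_distrib]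
    exact Finset.sum_congr rfl fun i _ => by ring
  rw [integral_congr_ae (ae_of_all _ hL), integral_congr_ae (ae_of_all _ hR),
    integral_const_mul, integral_const_mul,
    fbm_mgf_real hH hB' (k+1) (Fin.cons t s : Fin (k+1) → ℝ) (Fin.cons 1 β : Fin (k+1) → ℝ) (Real.sqrt 2),
    fbm_mgf_real hH hB' k s β (Real.sqrt 2)]
  rw [← Real.exp_add, ← Real.exp_add]
  congr 1
  rw [Real.sq_sqrt (by norm_num : (0:ℝ) ≤ 2)]
  have hQ1 : fQ H (Fin.cons t s : Fin (k+1) → ℝ) (Fin.cons 1 β : Fin (k+1) → ℝ)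
      = |t| ^ (2*H) + (∑ i, β i * (|t| ^ (2*H) + |s i| ^ (2*H) - |s i - t| ^ (2*H)))
        + fQ H s β := by
    have e0 : |t - t| ^ (2*H) = 0 := by rw [sub_self, abs_zero, Real.zero_rpow h2H]
    simp only [fQ, Fin.sum_univ_succ, Fin.cons_zero, Fin.cons_succ, one_mul, mul_one, e0]
    rw [Finset.sum_add_distrib]
    have hc : (∑ x, β x * ((|t| ^ (2*H) + |s x| ^ (2*H) - |t - s x| ^ (2*H)) / 2))
        + ∑ x, β x * ((|s x| ^ (2*H) + |t| ^ (2*H) - |s x - t| ^ (2*H)) / 2)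
        = ∑ i, β i * (|t| ^ (2*H) + |s i| ^ (2*H) - |s i - t| ^ (2*H)) := by
      rw [← Finset.sum_add_distrib]
      refine Finset.sum_congr rfl fun i _ => ?_
      rw [abs_sub_comm t (s i)]
      ring
    linarith [hc]
  rw [hQ1]
  have hs1 : ∑ i, β i * (|t| ^ (2*H) + |s i| ^ (2*H) - |s i - t| ^ (2*H))
      = (∑ i, β i * (|t| ^ (2*H) - |s i - t| ^ (2*H))) + ∑ i, β i * |s i| ^ (2*H) := by
    rw [← Finset.sum_add_distrib]
    exact Finset.sum_congr rfl fun i _ => by ring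
  rw [hs1]
  ring
end
end

section
/- For every η > 0, ∫_ℝ dy / (∑_{k∈ℤ} e^{k y η² − k² η²}) = 2. -/
open MeasureTheory Real
noncomputable section

open Filter Set in
private lemma sum_nat_aux (b y : ℝ) (hb : 0 < b) :
    Summable (fun n : ℕ => Real.exp ((n:ℝ) * y * b - (n:ℝ) ^ 2 * b)) := by
  apply summable_of_ratio_norm_eventually_le (r := 1/2) (by norm_num)
  filter_upwards [eventually_ge_atTop ⌈y + Real.log 2 / b⌉₊] with n hn
  have h1 : y + Real.log 2 / b ≤ (n:ℝ) :=
    le_trans (Nat.le_ceil _) (by exact_mod_cast Nat.cast_le.mpr hn)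
  have hn' : (y - 2*(n:ℝ) - 1) * b ≤ -Real.log 2 := by
    rw [← le_div_iff₀ hb, neg_div]
    have h0 : (0:ℝ) ≤ (n:ℝ) := Nat.cast_nonneg n
    linarith
  have hexp : Real.exp ((y - 2*(n:ℝ) - 1) * b) ≤ 1/2 := by
    calc Real.exp ((y - 2*(n:ℝ) - 1) * b) ≤ Real.exp (-Real.log 2) := Real.exp_le_exp.mpr hn'
    _ = 1/2 := by rw [Real.exp_neg, Real.exp_log (by norm_num)]; norm_num
  rw [Real.norm_eq_abs, Real.norm_eq_abs, abs_of_pos (Real.exp_pos _),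
    abs_of_pos (Real.exp_pos _)]
  have key : Real.exp (((n+1:ℕ):ℝ)*y*b - ((n+1:ℕ):ℝ)^2*b)
      = Real.exp ((y - 2*(n:ℝ) - 1)*b) * Real.exp ((n:ℝ)*y*b - (n:ℝ)^2*b) := by
    rw [← Real.exp_add]; push_cast; ring_nf
  rw [key]
  exact mul_le_mul_of_nonneg_right hexp (Real.exp_pos _).le

private lemma sum_int_aux (b y : ℝ) (hb : 0 < b) :
    Summable (fun k : ℤ => Real.exp ((k:ℝ) * y * b - (k:ℝ) ^ 2 * b)) := by
  apply Summable.of_nat_of_neg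
  · exact (sum_nat_aux b y hb).congr (fun n => by push_cast; ring_nf)
  · exact (sum_nat_aux b (-y) hb).congr (fun n => by push_cast; ring_nf)

private lemma one_le_S (b y : ℝ) (hb : 0 < b) :
    1 ≤ ∑' k : ℤ, Real.exp ((k:ℝ) * y * b - (k:ℝ) ^ 2 * b) := by
  have h := Summable.le_tsum (sum_int_aux b y hb) 0 (fun i _ => (Real.exp_pos _).le)
  simpa using h

private lemma S_pos (b y : ℝ) (hb : 0 < b) :
    0 < ∑' k : ℤ, Real.exp ((k:ℝ) * y * b - (k:ℝ) ^ 2 * b) :=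
  lt_of_lt_of_le one_pos (one_le_S b y hb)

private lemma S_even (b y : ℝ) :
    ∑' k : ℤ, Real.exp ((k:ℝ) * (-y) * b - (k:ℝ) ^ 2 * b)
      = ∑' k : ℤ, Real.exp ((k:ℝ) * y * b - (k:ℝ) ^ 2 * b) := by
  rw [← (Equiv.neg ℤ).tsum_eq (fun k : ℤ => Real.exp ((k:ℝ) * y * b - (k:ℝ) ^ 2 * b))]
  exact tsum_congr fun k => by simp only [Equiv.neg_apply]; push_cast; ring_nf

private lemma S_shift (b y : ℝ) (n : ℤ) :
    ∑' k : ℤ, Real.exp ((k:ℝ) * (y + 2*n) * b - (k:ℝ) ^ 2 * b)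
      = Real.exp ((n:ℝ)*y*b + (n:ℝ)^2*b)
        * ∑' k : ℤ, Real.exp ((k:ℝ) * y * b - (k:ℝ) ^ 2 * b) := by
  rw [← (Equiv.addRight n).tsum_eq
    (fun k : ℤ => Real.exp ((k:ℝ) * (y + 2*n) * b - (k:ℝ) ^ 2 * b)), ← tsum_mul_left]
  exact tsum_congr fun k => by
    simp only [Equiv.coe_addRight]
    rw [← Real.exp_add]; push_cast; ring_nf

/-- The sum over translates of `1/S` equals 1. -/
private lemma inv_S_shift (b y : ℝ) (hb : 0 < b) (n : ℤ) :
    1 / ∑' k : ℤ, Real.exp ((k:ℝ) * (y + 2*n) * b - (k:ℝ) ^ 2 * b)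
      = Real.exp ((n:ℝ)*(-y)*b - (n:ℝ)^2*b)
        * (1 / ∑' k : ℤ, Real.exp ((k:ℝ) * y * b - (k:ℝ) ^ 2 * b)) := by
  rw [S_shift b y n, one_div, mul_inv, ← Real.exp_neg, ← one_div]
  congr 2
  ring

private lemma tsum_inv_S (b y : ℝ) (hb : 0 < b) :
    ∑' n : ℤ, (1 / ∑' k : ℤ, Real.exp ((k:ℝ) * (y + 2*n) * b - (k:ℝ) ^ 2 * b)) = 1 := by
  have h : (fun n : ℤ => 1 / ∑' k : ℤ, Real.exp ((k:ℝ) * (y + 2*n) * b - (k:ℝ) ^ 2 * b))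
      = fun n : ℤ => Real.exp ((n:ℝ)*(-y)*b - (n:ℝ)^2*b)
        * (1 / ∑' k : ℤ, Real.exp ((k:ℝ) * y * b - (k:ℝ) ^ 2 * b)) :=
    funext fun n => inv_S_shift b y hb n
  rw [h, tsum_mul_right, S_even b y]
  rw [mul_one_div]
  exact div_self (ne_of_gt (S_pos b y hb))

private lemma summable_inv_S (b y : ℝ) (hb : 0 < b) :
    Summable (fun n : ℤ =>
      1 / ∑' k : ℤ, Real.exp ((k:ℝ) * (y + 2*n) * b - (k:ℝ) ^ 2 * b)) := by
  have h : (fun n : ℤ => 1 / ∑' k : ℤ, Real.exp ((k:ℝ) * (y + 2*n) * b - (k:ℝ) ^ 2 * b))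
      = fun n : ℤ => Real.exp ((n:ℝ)*(-y)*b - (n:ℝ)^2*b)
        * (1 / ∑' k : ℤ, Real.exp ((k:ℝ) * y * b - (k:ℝ) ^ 2 * b)) :=
    funext fun n => inv_S_shift b y hb n
  rw [h]
  exact (sum_int_aux b (-y) hb).mul_right _

private lemma S_measurable (b : ℝ) (hb : 0 < b) :
    Measurable (fun y : ℝ => ∑' k : ℤ, Real.exp ((k:ℝ) * y * b - (k:ℝ) ^ 2 * b)) := by
  have h : (fun y : ℝ => ∑' k : ℤ, Real.exp ((k:ℝ) * y * b - (k:ℝ) ^ 2 * b))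
      = fun y : ℝ =>
        (∑' k : ℤ, ENNReal.ofReal (Real.exp ((k:ℝ) * y * b - (k:ℝ) ^ 2 * b))).toReal := by
    funext y
    rw [← ENNReal.ofReal_tsum_of_nonneg (fun k => (Real.exp_pos _).le) (sum_int_aux b y hb),
      ENNReal.toReal_ofReal (le_of_lt (S_pos b y hb))]
  rw [h]
  exact (Measurable.ennreal_tsum fun k =>
    (ENNReal.measurable_ofReal.comp ((Real.continuous_exp.comp (by continuity)).measurable))).ennreal_toReal

theorem stmt10 (η : ℝ) (hη : 0 < η) :
    ∫ y : ℝ, 1 / (∑' k : ℤ, Real.exp ((k:ℝ) * y * η ^ 2 - (k:ℝ) ^ 2 * η ^ 2)) = 2 := by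
  set b := η ^ 2 with hbdef
  have hb : 0 < b := by positivity
  set S : ℝ → ℝ := fun y => ∑' k : ℤ, Real.exp ((k:ℝ) * y * b - (k:ℝ) ^ 2 * b) with hS
  have hSmeas : Measurable S := S_measurable b hb
  have hfmeas : Measurable (fun y => 1 / S y) := hSmeas.const_div 1
  have hfnonneg : ∀ y, 0 ≤ 1 / S y := fun y => le_of_lt (div_pos one_pos (S_pos b y hb))
  -- lintegral computation
  have hFmeas : Measurable fun y : ℝ => ENNReal.ofReal (1 / S y) :=
    ENNReal.measurable_ofReal.comp hfmeas
  have hlin : ∫⁻ y : ℝ, ENNReal.ofReal (1 / S y) = ENNReal.ofReal 2 := by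
    have hfd := isAddFundamentalDomain_Ioc (by norm_num : (0:ℝ) < 2) 0 volume
    have hinj : Function.Injective fun n : ℤ => n • (2:ℝ) :=
      (zsmul_left_strictMono (by norm_num : (0:ℝ) < 2)).injective
    let e : ℤ ≃ AddSubgroup.zmultiples (2:ℝ) :=
      Equiv.ofBijective (Set.codRestrict (fun n : ℤ => n • (2:ℝ)) _
        (fun n => AddSubgroup.zsmul_mem_zmultiples _ n))
        ((Equiv.ofInjective _ hinj).bijective)
    calc ∫⁻ y : ℝ, ENNReal.ofReal (1 / S y)
        = ∑' g : AddSubgroup.zmultiples (2:ℝ), ∫⁻ x in Set.Ioc (0:ℝ) (0+2),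
            ENNReal.ofReal (1 / S (-g +ᵥ x)) := hfd.lintegral_eq_tsum' _
      _ = ∑' n : ℤ, ∫⁻ x in Set.Ioc (0:ℝ) (0+2),
            ENNReal.ofReal (1 / S (-(2*(n:ℝ)) + x)) := by
          rw [← e.tsum_eq]
          refine tsum_congr fun n => ?_
          congr 1
          funext x
          have : (-(e n) : AddSubgroup.zmultiples (2:ℝ)) +ᵥ x = -(2*(n:ℝ)) + x := by
            show -((n • (2:ℝ))) + x = -(2*(n:ℝ)) + x
            rw [zsmul_eq_mul]; ring_nf
          rw [this]
      _ = ∫⁻ x in Set.Ioc (0:ℝ) (0+2),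
            ∑' n : ℤ, ENNReal.ofReal (1 / S (-(2*(n:ℝ)) + x)) := by
          rw [lintegral_tsum]
          exact fun n => (hFmeas.comp (measurable_const.add measurable_id)).aemeasurable
      _ = ∫⁻ x in Set.Ioc (0:ℝ) (0+2), 1 := by
          refine setLIntegral_congr_fun_ae measurableSet_Ioc (Filter.Eventually.of_forall
            fun x _ => ?_)
          rw [← (Equiv.neg ℤ).tsum_eq (fun n : ℤ => ENNReal.ofReal (1 / S (-(2*(n:ℝ)) + x)))]
          have h3 : (fun n : ℤ => ENNReal.ofReal (1 / S (-(2*((Equiv.neg ℤ n):ℝ)) + x)))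
              = fun n : ℤ => ENNReal.ofReal (1 / S (x + 2*(n:ℝ))) := by
            funext n
            congr 2
            simp only [Equiv.neg_apply]
            push_cast; ring
          rw [h3]
          simp only [hS]
          rw [← ENNReal.ofReal_tsum_of_nonneg
            (fun n : ℤ => le_of_lt (div_pos one_pos (S_pos b (x + 2*(n:ℝ)) hb)))
            (summable_inv_S b x hb), tsum_inv_S b x hb, ENNReal.ofReal_one]
      _ = ENNReal.ofReal 2 := by
          rw [setLIntegral_one, Real.volume_Ioc]
          norm_num
  rw [integral_eq_lintegral_of_nonneg_ae (Filter.Eventually.of_forall hfnonneg)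
    hfmeas.aestronglyMeasurable, hlin, ENNReal.toReal_ofReal (by norm_num)]
end
end
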